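/- Let p ≥ 2. Let Γ have the Haar probability distribution on O_p and let V₁, V₂ be independent random matrices, each Haar distributed on O_{p−1}, with Γ, V₁, V₂ mutually independent. Then the random matrix diag(1, V₁) · ψ₀(Γ₁₁) · diag(1, V₂)ᵀ has the Haar distribution on O_p; that is, its law equals the law of Γ. -/

import Mathlib

open MeasureTheory Matrix

/-- The (Borel = product) σ-algebra on real matrices. -/
instance matMeas (m n : ℕ) : MeasurableSpace (Matrix (Fin m) (Fin n) ℝ) := MeasurableSpace.pi

/-- `μ` is the Haar probability distribution on the orthogonal group `O_p`, viewed as a Borel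
probability measure on the space of `p × p` real matrices which is concentrated on the set of
orthogonal matrices and invariant under left and right translation by orthogonal matrices. -/
def IsHaarOrthogonal (p : ℕ) (μ : Measure (Matrix (Fin p) (Fin p) ℝ)) : Prop :=
  IsProbabilityMeasure μ ∧
  μ {A | A ∈ Matrix.orthogonalGroup (Fin p) ℝ} = 1 ∧
  (∀ g ∈ Matrix.orthogonalGroup (Fin p) ℝ, Measure.map (fun A => g * A) μ = μ) ∧
  (∀ g ∈ Matrix.orthogonalGroup (Fin p) ℝ, Measure.map (fun A => A * g) μ = μ)

/-- The density `f(x|p) = Γ(p/2)/(Γ(1/2)Γ((p-1)/2)) (1-x²)^((p-3)/2)` on `(-1,1)`,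
extended by `0` outside `(-1,1)`. -/
noncomputable def haarEntryDensity (p : ℕ) (x : ℝ) : ENNReal :=
  ENNReal.ofReal (if x ∈ Set.Ioo (-1 : ℝ) 1 then
    (Real.Gamma ((p : ℝ) / 2) / (Real.Gamma (1 / 2) * Real.Gamma (((p : ℝ) - 1) / 2))) *
      (1 - x ^ 2) ^ (((p : ℝ) - 3) / 2)
  else 0)

/-- `ν` is the uniform distribution on the unit sphere `S^{k-1} ⊆ ℝ^k`, viewed as the unique
rotation-invariant Borel probability measure on `ℝ^k` concentrated on the unit sphere. -/
def IsUniformOnSphere (k : ℕ) (ν : Measure (EuclideanSpace ℝ (Fin k))) : Prop :=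
  IsProbabilityMeasure ν ∧ ν {u | ‖u‖ = 1} = 1 ∧
  ∀ L : EuclideanSpace ℝ (Fin k) ≃ₗᵢ[ℝ] EuclideanSpace ℝ (Fin k), Measure.map L ν = ν

/-- The `(n+1) × (n+1)` block-diagonal matrix `diag(γ, Δ)` with scalar block `γ` and lower
block `Δ`. -/
def cornerBlock {n : ℕ} (γ : ℝ) (Δ : Matrix (Fin n) (Fin n) ℝ) :
    Matrix (Fin (n + 1)) (Fin (n + 1)) ℝ :=
  Matrix.of fun i j =>
    if hi : i = 0 then (if j = 0 then γ else 0)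
    else if hj : j = 0 then 0
    else Δ (i.pred hi) (j.pred hj)

/-- The matrix `ψ₀(γ)`: the `p × p` orthogonal matrix whose first row and first column both
equal `(γ, √(1-γ²), 0, …, 0)` and whose lower-right `(p-1) × (p-1)` block is
`diag(-γ, I_{p-2})` (here `p = n+2`). -/
noncomputable def psi0 (n : ℕ) (γ : ℝ) : Matrix (Fin (n + 2)) (Fin (n + 2)) ℝ :=
  Matrix.of fun i j =>
    if i = 0 then (if j = 0 then γ else if j = 1 then Real.sqrt (1 - γ ^ 2) else 0)
    else if i = 1 then (if j = 0 then Real.sqrt (1 - γ ^ 2) else if j = 1 then -γ else 0)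
    else if i = j then 1 else 0

/-- The reflection (Householder) matrix `I - 2 w wᵀ / (wᵀ w)`. -/
noncomputable def reflMatrix (p : ℕ) (w : Fin p → ℝ) : Matrix (Fin p) (Fin p) ℝ :=
  1 - (2 / (w ⬝ᵥ w)) • Matrix.vecMulVec w w

namespace HaarAux


lemma star_eq_transpose {k : ℕ} (M : Matrix (Fin k) (Fin k) ℝ) : star M = Mᵀ := by
  ext i j; simp [Matrix.star_apply]

variable {n : ℕ} (V W : Matrix (Fin n) (Fin n) ℝ)

@[simp] lemma cb_zero_zero : cornerBlock 1 V 0 0 = 1 := rfl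
@[simp] lemma cb_zero_succ (j : Fin n) : cornerBlock 1 V 0 j.succ = 0 := by
  simp [cornerBlock, Fin.succ_ne_zero]
@[simp] lemma cb_succ_zero (i : Fin n) : cornerBlock 1 V i.succ 0 = 0 := by
  simp [cornerBlock, Fin.succ_ne_zero]
@[simp] lemma cb_succ_succ (i j : Fin n) : cornerBlock 1 V i.succ j.succ = V i j := by
  simp [cornerBlock, Fin.succ_ne_zero]

lemma cb_mul : cornerBlock 1 V * cornerBlock 1 W = cornerBlock 1 (V * W) := by
  ext i j
  induction i using Fin.cases with
  | zero =>
    induction j using Fin.cases with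
    | zero => simp [Matrix.mul_apply, Fin.sum_univ_succ]
    | succ j => simp [Matrix.mul_apply, Fin.sum_univ_succ]
  | succ i =>
    induction j using Fin.cases with
    | zero => simp [Matrix.mul_apply, Fin.sum_univ_succ]
    | succ j => simp [Matrix.mul_apply, Fin.sum_univ_succ]

lemma cb_transpose : (cornerBlock 1 V)ᵀ = cornerBlock 1 Vᵀ := by
  ext i j
  induction i using Fin.cases with
  | zero => induction j using Fin.cases <;> simp
  | succ i => induction j using Fin.cases <;> simp

lemma cb_mem (hV : V ∈ Matrix.orthogonalGroup (Fin n) ℝ) :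
    cornerBlock 1 V ∈ Matrix.orthogonalGroup (Fin (n+1)) ℝ := by
  rw [Matrix.mem_orthogonalGroup_iff] at hV ⊢
  rw [cb_transpose, cb_mul, hV]
  ext i j
  induction i using Fin.cases with
  | zero =>
    induction j using Fin.cases with
    | zero => simp
    | succ j => simp [Matrix.one_apply, (Fin.succ_ne_zero j).symm]
  | succ i =>
    induction j using Fin.cases with
    | zero => simp [Matrix.one_apply, Fin.succ_ne_zero i]
    | succ j => simp [Matrix.one_apply, Fin.succ_inj]




lemma succ_succ_ne_one (j : Fin n) : (j.succ.succ : Fin (n+2)) ≠ 1 := by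
  rw [← Fin.succ_zero_eq_one, Ne, Fin.succ_inj]
  exact Fin.succ_ne_zero j

variable (γ : ℝ)

@[simp] lemma psi0_00 : psi0 n γ 0 0 = γ := rfl
@[simp] lemma psi0_01 : psi0 n γ 0 1 = Real.sqrt (1 - γ^2) := by
  simp [psi0, Fin.one_eq_zero_iff]
@[simp] lemma psi0_10 : psi0 n γ 1 0 = Real.sqrt (1 - γ^2) := by
  simp [psi0, Fin.one_eq_zero_iff]
@[simp] lemma psi0_11 : psi0 n γ 1 1 = -γ := by
  simp [psi0, Fin.one_eq_zero_iff]
@[simp] lemma psi0_0s (j : Fin n) : psi0 n γ 0 j.succ.succ = 0 := by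
  simp [psi0, (Fin.succ_ne_zero _), succ_succ_ne_one]
@[simp] lemma psi0_1s (j : Fin n) : psi0 n γ 1 j.succ.succ = 0 := by
  simp [psi0, Fin.one_eq_zero_iff, (Fin.succ_ne_zero _), succ_succ_ne_one]
@[simp] lemma psi0_s0 (i : Fin n) : psi0 n γ i.succ.succ 0 = 0 := by
  simp [psi0, (Fin.succ_ne_zero _), succ_succ_ne_one, (Fin.succ_ne_zero _).symm]
@[simp] lemma psi0_s1 (i : Fin n) : psi0 n γ i.succ.succ 1 = 0 := by
  simp [psi0, (Fin.succ_ne_zero _), succ_succ_ne_one, (succ_succ_ne_one i).symm]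
@[simp] lemma psi0_ss (i j : Fin n) :
    psi0 n γ i.succ.succ j.succ.succ = if i = j then 1 else 0 := by
  simp [psi0, (Fin.succ_ne_zero _), succ_succ_ne_one, Fin.succ_inj]

lemma psi0_mem (hγ : γ^2 ≤ 1) : psi0 n γ ∈ Matrix.orthogonalGroup (Fin (n+2)) ℝ := by
  have hs : Real.sqrt (1 - γ^2) * Real.sqrt (1 - γ^2) = 1 - γ^2 :=
    Real.mul_self_sqrt (by linarith)
  rw [Matrix.mem_orthogonalGroup_iff]
  have hstar : star (psi0 n γ) = (psi0 n γ)ᵀ := by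
    ext i j; simp [Matrix.star_apply]
  ext i j
  induction i using Fin.cases with
  | zero =>
    induction j using Fin.cases with
    | zero =>
      simp [Matrix.mul_apply, Fin.sum_univ_succ, Matrix.one_apply]
      linarith
    | succ j =>
      induction j using Fin.cases with
      | zero =>
        simp [Matrix.mul_apply, Fin.sum_univ_succ, Matrix.one_apply, Fin.succ_zero_eq_one,
          (Fin.succ_ne_zero (0 : Fin (n+1))).symm]
        ring
      | succ j =>
        simp [Matrix.mul_apply, Fin.sum_univ_succ, Matrix.one_apply, Fin.succ_zero_eq_one,
          (Fin.succ_ne_zero _).symm]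
  | succ i =>
    induction i using Fin.cases with
    | zero =>
      induction j using Fin.cases with
      | zero =>
        simp [Matrix.mul_apply, Fin.sum_univ_succ, Matrix.one_apply, Fin.succ_zero_eq_one,
          Fin.succ_ne_zero]
        ring
      | succ j =>
        induction j using Fin.cases with
        | zero =>
          simp [Matrix.mul_apply, Fin.sum_univ_succ, Matrix.one_apply, Fin.succ_zero_eq_one]
          linarith
        | succ j =>
          simp [Matrix.mul_apply, Fin.sum_univ_succ, Matrix.one_apply, Fin.succ_zero_eq_one,
            (succ_succ_ne_one j).symm]
    | succ i =>
      induction j using Fin.cases with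
      | zero =>
        simp [Matrix.mul_apply, Fin.sum_univ_succ, Matrix.one_apply, Fin.succ_zero_eq_one,
          Fin.succ_ne_zero, (Fin.succ_ne_zero _).symm]
      | succ j =>
        induction j using Fin.cases with
        | zero =>
          simp [Matrix.mul_apply, Fin.sum_univ_succ, Matrix.one_apply, Fin.succ_zero_eq_one,
            succ_succ_ne_one, Fin.succ_inj]
        | succ j =>
          simp [Matrix.mul_apply, Fin.sum_univ_succ, Matrix.one_apply, Fin.succ_zero_eq_one,
            Fin.succ_inj, Finset.sum_ite_eq, ite_mul]



lemma householder {m : ℕ} (u : Fin (m+1) → ℝ) (s : ℝ) (hu : u ⬝ᵥ u = s^2) :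
    ∃ h ∈ Matrix.orthogonalGroup (Fin (m+1)) ℝ,
      h *ᵥ u = (fun j => if j = 0 then s else 0) := by
  classical
  set t : Fin (m+1) → ℝ := fun j => if j = 0 then s else 0 with ht
  have htu : t ⬝ᵥ u = s * u 0 := by
    simp [t, dotProduct, ite_mul, Finset.sum_ite_eq]
  have hut : u ⬝ᵥ t = s * u 0 := by
    simp [t, dotProduct, mul_ite, Finset.sum_ite_eq, mul_comm]
  have htt : t ⬝ᵥ t = s^2 := by
    simp [t, dotProduct, ite_mul, Finset.sum_ite_eq, sq]
  by_cases hw : u - t = 0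
  · refine ⟨1, one_mem _, ?_⟩
    rw [Matrix.one_mulVec]
    have := sub_eq_zero.mp hw
    rw [this]
  · set w : Fin (m+1) → ℝ := u - t with hwdef
    set c : ℝ := w ⬝ᵥ w with hc
    have hc0 : c ≠ 0 := by
      rw [hc]
      intro h
      exact hw (by simpa using (dotProduct_self_eq_zero).mp h)
    set W : Matrix (Fin (m+1)) (Fin (m+1)) ℝ := vecMulVec w w with hW
    set R : Matrix (Fin (m+1)) (Fin (m+1)) ℝ := 1 - (2/c) • W with hR
    have hWsymm : Wᵀ = W := by
      ext i j; simp [hW, vecMulVec_apply, mul_comm]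
    have hWW : W * W = c • W := by
      ext i j
      simp only [hW, Matrix.mul_apply, vecMulVec_apply, Matrix.smul_apply, smul_eq_mul, hc,
        dotProduct]
      rw [Finset.sum_mul]
      apply Finset.sum_congr rfl
      intros; ring
    have hRR : R * R = 1 := by
      rw [hR]
      have expand : (1 - (2/c) • W) * (1 - (2/c) • W)
          = 1 - (2/c) • W - (2/c) • W + ((2/c) * (2/c)) • (W * W) := by
        simp only [mul_sub, sub_mul, Matrix.smul_mul, Matrix.mul_smul, smul_smul, mul_one,
          one_mul]
        abel
      rw [expand, hWW, smul_smul]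
      have hcc : 2/c * (2/c) * c = 2/c + 2/c := by field_simp; ring
      rw [hcc, add_smul]
      abel
    have hRmem : R ∈ Matrix.orthogonalGroup (Fin (m+1)) ℝ := by
      rw [Matrix.mem_orthogonalGroup_iff]
      have hstar : star R = R := by
        have : star R = Rᵀ := by ext i j; simp [Matrix.star_apply]
        rw [this, hR, Matrix.transpose_sub, Matrix.transpose_one, Matrix.transpose_smul, hWsymm]
      rw [← star_eq_transpose, hstar, hRR]
    -- compute w ⬝ᵥ u and c
    have hwu : w ⬝ᵥ u = s^2 - s * u 0 := by
      rw [hwdef, sub_dotProduct, hu, htu]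
    have hcval : c = 2 * (w ⬝ᵥ u) := by
      rw [hc, hwdef, sub_dotProduct, dotProduct_sub, dotProduct_sub,
        hu, htu, hut, htt, hwu]
      ring
    have hWu : W *ᵥ u = (w ⬝ᵥ u) • w := by
      ext i
      simp only [hW, Matrix.mulVec, dotProduct, vecMulVec_apply, Pi.smul_apply, smul_eq_mul]
      rw [Finset.sum_mul]
      apply Finset.sum_congr rfl
      intros; ring
    refine ⟨R, hRmem, ?_⟩
    rw [hR, Matrix.sub_mulVec, Matrix.one_mulVec, Matrix.smul_mulVec, hWu, smul_smul]
    have h1 : 2/c * (w ⬝ᵥ u) = 1 := by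
      rw [hcval]; field_simp
      rw [hcval] at hc0
      have : w ⬝ᵥ u ≠ 0 := fun h => hc0 (by rw [h]; ring)
      field_simp
    rw [h1, one_smul, hwdef]
    ext j; simp [t]


lemma key (A : Matrix (Fin (n+2)) (Fin (n+2)) ℝ)
    (hA : A ∈ Matrix.orthogonalGroup (Fin (n+2)) ℝ) :
    ∃ h₁ ∈ Matrix.orthogonalGroup (Fin (n+1)) ℝ,
      ∃ h₂ ∈ Matrix.orthogonalGroup (Fin (n+1)) ℝ,
        psi0 n (A 0 0) = cornerBlock 1 h₁ * A * (cornerBlock 1 h₂)ᵀ := by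
  classical
  set γ : ℝ := A 0 0 with hγdef
  set u : Fin (n+1) → ℝ := fun k => A 0 k.succ with hudef
  have hAA : A * star A = 1 := (Matrix.mem_orthogonalGroup_iff _ _).mp hA
  have hrow : γ * γ + u ⬝ᵥ u = 1 := by
    have h1 : (A * star A) 0 0 = 1 := by rw [hAA]; simp
    rw [star_eq_transpose] at h1
    simpa [Matrix.mul_apply, Fin.sum_univ_succ, dotProduct, u] using h1
  have husq : 0 ≤ u ⬝ᵥ u := Finset.sum_nonneg fun k _ => mul_self_nonneg _
  have hγ2 : γ^2 ≤ 1 := by nlinarith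
  set s : ℝ := Real.sqrt (1 - γ^2) with hsdef
  have hs2 : s^2 = 1 - γ^2 := Real.sq_sqrt (by linarith)
  have huu : u ⬝ᵥ u = s^2 := by rw [hs2]; nlinarith
  obtain ⟨h₂, hh₂mem, hh₂⟩ := householder u s huu
  set B : Matrix (Fin (n+2)) (Fin (n+2)) ℝ := A * (cornerBlock 1 h₂)ᵀ with hBdef
  have hcbt_mem : (cornerBlock 1 h₂)ᵀ ∈ Matrix.orthogonalGroup (Fin (n+2)) ℝ := by
    rw [← star_eq_transpose]
    exact Unitary.star_mem (cb_mem _ hh₂mem)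
  have hB : B ∈ Matrix.orthogonalGroup (Fin (n+2)) ℝ := mul_mem hA hcbt_mem
  have hBrow : ∀ j, B 0 j = psi0 n γ 0 j := by
    intro j
    induction j using Fin.cases with
    | zero =>
      simp [hBdef, Matrix.mul_apply, Matrix.transpose_apply, Fin.sum_univ_succ] <;> rfl
    | succ j =>
      have hBv : B 0 j.succ = (h₂ *ᵥ u) j := by
        simp only [hBdef, Matrix.mul_apply, Matrix.transpose_apply, Fin.sum_univ_succ,
          cb_succ_zero, cb_succ_succ, mul_zero, zero_add]
        simp only [Matrix.mulVec, dotProduct, u, mul_comm]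
        rw [Fin.sum_univ_succ, Fin.succ_zero_eq_one]
      rw [hBv, hh₂]
      induction j using Fin.cases with
      | zero => simp [Fin.succ_zero_eq_one] <;> rfl
      | succ j => simp [(Fin.succ_ne_zero j)]
  set C : Matrix (Fin (n+2)) (Fin (n+2)) ℝ := psi0 n γ * Bᵀ with hCdef
  have hC : C ∈ Matrix.orthogonalGroup (Fin (n+2)) ℝ := by
    refine mul_mem (psi0_mem γ hγ2) ?_
    rw [← star_eq_transpose]
    exact Unitary.star_mem hB
  have hBB : B * Bᵀ = 1 := by
    have := (Matrix.mem_orthogonalGroup_iff _ _).mp hB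
    exact this
  have hBB' : Bᵀ * B = 1 := by
    have := (Matrix.mem_orthogonalGroup_iff' _ _).mp hB
    exact this
  have hCrow : ∀ j, C 0 j = (1 : Matrix (Fin (n+2)) (Fin (n+2)) ℝ) 0 j := by
    intro j
    have : C 0 j = ∑ k, B 0 k * B j k := by
      simp only [hCdef, Matrix.mul_apply, Matrix.transpose_apply]
      exact Finset.sum_congr rfl fun k _ => by rw [hBrow k]
    rw [this, ← hBB]
    simp [Matrix.mul_apply, Matrix.transpose_apply]
  have hC00 : C 0 0 = 1 := by rw [hCrow 0]; simp
  have hCcol : ∀ i : Fin (n+1), C i.succ 0 = 0 := by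
    have hCC' : Cᵀ * C = 1 := by
      have := (Matrix.mem_orthogonalGroup_iff' _ _).mp hC
      exact this
    have h1 : (Cᵀ * C) 0 0 = 1 := by rw [hCC']; simp
    rw [Matrix.mul_apply] at h1
    simp only [Matrix.transpose_apply] at h1
    rw [Fin.sum_univ_succ, hC00] at h1
    have h3 : ∑ i : Fin (n+1), C i.succ 0 * C i.succ 0 = 0 := by linarith
    intro i
    have := (Finset.sum_eq_zero_iff_of_nonneg fun k _ => mul_self_nonneg (C k.succ 0)).mp h3 i
      (Finset.mem_univ i)
    exact mul_self_eq_zero.mp this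
  set h₁ : Matrix (Fin (n+1)) (Fin (n+1)) ℝ := Matrix.of fun i j => C i.succ j.succ with hh₁def
  have hcbC : cornerBlock 1 h₁ = C := by
    ext i j
    induction i using Fin.cases with
    | zero =>
      induction j using Fin.cases with
      | zero => rw [hC00]; rfl
      | succ j =>
        rw [cb_zero_succ, hCrow j.succ]
        simp [Matrix.one_apply, (Fin.succ_ne_zero j).symm]
    | succ i =>
      induction j using Fin.cases with
      | zero => rw [cb_succ_zero, hCcol i]
      | succ j => rw [cb_succ_succ]; rfl
  have hh₁mem : h₁ ∈ Matrix.orthogonalGroup (Fin (n+1)) ℝ := by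
    rw [Matrix.mem_orthogonalGroup_iff]
    have hCC : C * Cᵀ = 1 := by
      have := (Matrix.mem_orthogonalGroup_iff _ _).mp hC
      exact this
    rw [← hcbC, cb_transpose, cb_mul] at hCC
    ext i j
    have h4 := congrFun (congrFun hCC i.succ) j.succ
    simp only [cb_succ_succ] at h4
    rw [h4]
    simp [Matrix.one_apply, Fin.succ_inj]
  refine ⟨h₁, hh₁mem, h₂, hh₂mem, ?_⟩
  calc psi0 n γ = psi0 n γ * (Bᵀ * B) := by rw [hBB', mul_one]
    _ = C * B := by rw [hCdef, mul_assoc]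
    _ = cornerBlock 1 h₁ * (A * (cornerBlock 1 h₂)ᵀ) := by rw [hcbC, hBdef]
    _ = cornerBlock 1 h₁ * A * (cornerBlock 1 h₂)ᵀ := by rw [mul_assoc]


section Meas
variable {α : Type*} [MeasurableSpace α]

lemma measurable_entry_comp {a b : ℕ} {f : α → Matrix (Fin a) (Fin b) ℝ}
    (hf : Measurable f) (i : Fin a) (j : Fin b) : Measurable fun x => f x i j := by
  have h1 : Measurable fun M : Matrix (Fin a) (Fin b) ℝ => M i j :=
    (measurable_pi_apply j).comp (measurable_pi_apply (X := fun _ : Fin a => Fin b → ℝ) i)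
  exact h1.comp hf

lemma measurable_matrix {a b : ℕ} {f : α → Matrix (Fin a) (Fin b) ℝ}
    (hf : ∀ i j, Measurable fun x => f x i j) : Measurable f :=
  measurable_pi_lambda _ fun i => measurable_pi_lambda _ fun j => hf i j

lemma measurable_mul_comp {a : ℕ} {f g : α → Matrix (Fin a) (Fin a) ℝ}
    (hf : Measurable f) (hg : Measurable g) : Measurable fun x => f x * g x := by
  apply measurable_matrix
  intro i j
  simp only [Matrix.mul_apply]
  exact Finset.measurable_sum _ fun k _ =>
    (measurable_entry_comp hf i k).mul (measurable_entry_comp hg k j)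

lemma measurable_transpose_comp {a : ℕ} {f : α → Matrix (Fin a) (Fin a) ℝ}
    (hf : Measurable f) : Measurable fun x => (f x)ᵀ :=
  measurable_matrix fun i j => measurable_entry_comp hf j i

lemma measurable_cb_comp {a : ℕ} {f : α → Matrix (Fin a) (Fin a) ℝ}
    (hf : Measurable f) : Measurable fun x => cornerBlock 1 (f x) := by
  apply measurable_matrix
  intro i j
  induction i using Fin.cases with
  | zero =>
    induction j using Fin.cases with
    | zero => simp only [cb_zero_zero]; exact measurable_const
    | succ j => simp only [cb_zero_succ]; exact measurable_const
  | succ i =>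
    induction j using Fin.cases with
    | zero => simp only [cb_succ_zero]; exact measurable_const
    | succ j => simp only [cb_succ_succ]; exact measurable_entry_comp hf i j

lemma measurable_psi0_comp {k : ℕ} {g : α → ℝ} (hg : Measurable g) :
    Measurable fun x => psi0 k (g x) := by
  have hsq : Measurable fun x => Real.sqrt (1 - g x ^ 2) :=
    Real.continuous_sqrt.measurable.comp (measurable_const.sub (hg.pow_const 2))
  apply measurable_matrix
  intro i j
  simp only [psi0, Matrix.of_apply]
  split_ifs
  all_goals first
    | exact hg
    | exact hsq
    | exact hg.neg
    | exact measurable_const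

lemma measurableSet_eq_one {k : ℕ} {f : Matrix (Fin k) (Fin k) ℝ → Matrix (Fin k) (Fin k) ℝ}
    (hf : Measurable f) : MeasurableSet {A | f A = 1} := by
  have h : {A | f A = 1} =
      ⋂ i, ⋂ j, {A | f A i j = (1 : Matrix (Fin k) (Fin k) ℝ) i j} := by
    ext A
    simp only [Set.mem_setOf_eq, Set.mem_iInter]
    exact ⟨fun h i j => by rw [h], fun h => Matrix.ext fun i j => h i j⟩
  rw [h]
  refine MeasurableSet.iInter fun i => MeasurableSet.iInter fun j => ?_
  have h2 : {A | f A i j = (1 : Matrix (Fin k) (Fin k) ℝ) i j} =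
      (fun A => f A i j) ⁻¹' {(1 : Matrix (Fin k) (Fin k) ℝ) i j} := rfl
  rw [h2]
  exact (measurable_entry_comp hf i j) (measurableSet_singleton _)

lemma measurableSet_orth (k : ℕ) :
    MeasurableSet {A : Matrix (Fin k) (Fin k) ℝ | A ∈ Matrix.orthogonalGroup (Fin k) ℝ} := by
  have h : {A : Matrix (Fin k) (Fin k) ℝ | A ∈ Matrix.orthogonalGroup (Fin k) ℝ} =
      {A : Matrix (Fin k) (Fin k) ℝ | Aᵀ * A = 1} ∩ {A | A * Aᵀ = 1} := by
    ext A
    rw [Set.mem_setOf_eq, Set.mem_inter_iff, Set.mem_setOf_eq, Set.mem_setOf_eq]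
    rw [show (Aᵀ : Matrix (Fin k) (Fin k) ℝ) = star A from (star_eq_transpose A).symm]
    exact Unitary.mem_iff
  rw [h]
  exact (measurableSet_eq_one (measurable_mul_comp (measurable_transpose_comp measurable_id)
      measurable_id)).inter
    (measurableSet_eq_one (measurable_mul_comp measurable_id
      (measurable_transpose_comp measurable_id)))

end Meas

end HaarAux

/-- Proposition 2.4.  Let `p = n+2 ≥ 2`, let `Γ` be Haar distributed on
`O_p`, and let `V₁, V₂` be Haar distributed on `O_{p-1}`, with `Γ, V₁, V₂` mutually
independent.  Then `diag(1,V₁) · ψ₀(Γ₁₁) · diag(1,V₂)ᵀ` is Haar distributed on `O_p`. -/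
theorem conditional_representation_haar (n : ℕ)
    (μ : Measure (Matrix (Fin (n + 2)) (Fin (n + 2)) ℝ)) (hμ : IsHaarOrthogonal (n + 2) μ)
    (ν : Measure (Matrix (Fin (n + 1)) (Fin (n + 1)) ℝ)) (hν : IsHaarOrthogonal (n + 1) ν) :
    Measure.map
        (fun q : Matrix (Fin (n + 2)) (Fin (n + 2)) ℝ ×
            Matrix (Fin (n + 1)) (Fin (n + 1)) ℝ × Matrix (Fin (n + 1)) (Fin (n + 1)) ℝ =>
          cornerBlock 1 q.2.1 * psi0 n (q.1 0 0) * (cornerBlock 1 q.2.2)ᵀ)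
        (μ.prod (ν.prod ν)) = μ := by
  classical
  open HaarAux in
  obtain ⟨hμp, hμO, hμL, hμR⟩ := hμ
  obtain ⟨hνp, hνO, hνL, hνR⟩ := hν
  haveI := hμp
  haveI := hνp
  set G : Matrix (Fin (n + 2)) (Fin (n + 2)) ℝ ×
      Matrix (Fin (n + 1)) (Fin (n + 1)) ℝ × Matrix (Fin (n + 1)) (Fin (n + 1)) ℝ →
      Matrix (Fin (n + 2)) (Fin (n + 2)) ℝ :=
    fun q => cornerBlock 1 q.2.1 * q.1 * (cornerBlock 1 q.2.2)ᵀ with hGdef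
  set F : Matrix (Fin (n + 2)) (Fin (n + 2)) ℝ ×
      Matrix (Fin (n + 1)) (Fin (n + 1)) ℝ × Matrix (Fin (n + 1)) (Fin (n + 1)) ℝ →
      Matrix (Fin (n + 2)) (Fin (n + 2)) ℝ :=
    fun q => cornerBlock 1 q.2.1 * psi0 n (q.1 0 0) * (cornerBlock 1 q.2.2)ᵀ with hFdef
  have mF : Measurable F :=
    measurable_mul_comp
      (measurable_mul_comp (measurable_cb_comp (measurable_fst.comp measurable_snd))
        (measurable_psi0_comp (measurable_entry_comp measurable_fst 0 0)))
      (measurable_transpose_comp (measurable_cb_comp (measurable_snd.comp measurable_snd)))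
  have mG : Measurable G :=
    measurable_mul_comp
      (measurable_mul_comp (measurable_cb_comp (measurable_fst.comp measurable_snd))
        measurable_fst)
      (measurable_transpose_comp (measurable_cb_comp (measurable_snd.comp measurable_snd)))
  have hmulr : ∀ h : Matrix (Fin (n + 1)) (Fin (n + 1)) ℝ,
      Measurable fun V : Matrix (Fin (n + 1)) (Fin (n + 1)) ℝ => V * h :=
    fun h => measurable_mul_comp measurable_id measurable_const
  have hμae : ∀ᵐ A ∂μ, A ∈ Matrix.orthogonalGroup (Fin (n + 2)) ℝ := by
    rw [ae_iff]
    have h : {A | ¬ A ∈ Matrix.orthogonalGroup (Fin (n + 2)) ℝ} =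
        {A | A ∈ Matrix.orthogonalGroup (Fin (n + 2)) ℝ}ᶜ := rfl
    rw [h, measure_compl (measurableSet_orth _) (measure_ne_top μ _), measure_univ, hμO,
      tsub_self]
  have hννae : ∀ᵐ v ∂(ν.prod ν), v.1 ∈ Matrix.orthogonalGroup (Fin (n + 1)) ℝ ∧
      v.2 ∈ Matrix.orthogonalGroup (Fin (n + 1)) ℝ := by
    rw [ae_iff]
    have h : {v : Matrix (Fin (n + 1)) (Fin (n + 1)) ℝ × Matrix (Fin (n + 1)) (Fin (n + 1)) ℝ |
        ¬ (v.1 ∈ Matrix.orthogonalGroup (Fin (n + 1)) ℝ ∧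
          v.2 ∈ Matrix.orthogonalGroup (Fin (n + 1)) ℝ)} =
        ({V | V ∈ Matrix.orthogonalGroup (Fin (n + 1)) ℝ} ×ˢ
          {V | V ∈ Matrix.orthogonalGroup (Fin (n + 1)) ℝ})ᶜ := by
      ext v; simp [Set.mem_prod]
    rw [h, measure_compl ((measurableSet_orth _).prod (measurableSet_orth _))
      (measure_ne_top _ _), measure_univ, Measure.prod_prod, hνO, mul_one, tsub_self]
  ext E hE
  rw [Measure.map_apply mF hE, Measure.prod_apply (mF hE)]
  have step1 : ∀ᵐ A ∂μ,
      (ν.prod ν) (Prod.mk A ⁻¹' (F ⁻¹' E)) = (ν.prod ν) (Prod.mk A ⁻¹' (G ⁻¹' E)) := by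
    filter_upwards [hμae] with A hAO
    obtain ⟨h₁, hm1, h₂, hm2, hkey⟩ := key A hAO
    have hT : Measurable (Prod.map (fun V : Matrix (Fin (n + 1)) (Fin (n + 1)) ℝ => V * h₁)
        (fun V : Matrix (Fin (n + 1)) (Fin (n + 1)) ℝ => V * h₂)) :=
      ((hmulr h₁).comp measurable_fst).prodMk ((hmulr h₂).comp measurable_snd)
    have hmeasS : MeasurableSet (Prod.mk A ⁻¹' (G ⁻¹' E)) :=
      (measurable_prodMk_left : Measurable (Prod.mk A)) (mG hE)
    have hpre : (Prod.mk A ⁻¹' (F ⁻¹' E)) =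
        (Prod.map (fun V : Matrix (Fin (n + 1)) (Fin (n + 1)) ℝ => V * h₁)
          (fun V : Matrix (Fin (n + 1)) (Fin (n + 1)) ℝ => V * h₂)) ⁻¹'
          (Prod.mk A ⁻¹' (G ⁻¹' E)) := by
      ext v
      simp only [Set.mem_preimage, Prod.map, hGdef, hFdef]
      have heq : cornerBlock 1 v.1 * psi0 n (A 0 0) * (cornerBlock 1 v.2)ᵀ =
          cornerBlock 1 (v.1 * h₁) * A * (cornerBlock 1 (v.2 * h₂))ᵀ := by
        rw [hkey, ← cb_mul, ← cb_mul, Matrix.transpose_mul]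
        simp only [mul_assoc]
      rw [heq]
    rw [hpre, ← Measure.map_apply hT hmeasS]
    congr 1
    rw [← Measure.map_prod_map _ _ (hmulr h₁) (hmulr h₂), hνR _ hm1, hνR _ hm2]
  rw [lintegral_congr_ae step1, ← Measure.prod_apply (mG hE), Measure.prod_apply_symm (mG hE)]
  have step2 : ∀ᵐ v ∂(ν.prod ν), μ ((fun A => (A, v)) ⁻¹' (G ⁻¹' E)) = μ E := by
    filter_upwards [hννae] with v hv
    obtain ⟨hv1, hv2⟩ := hv
    have hg1 : cornerBlock 1 v.1 ∈ Matrix.orthogonalGroup (Fin (n + 2)) ℝ := cb_mem _ hv1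
    have hg2 : (cornerBlock 1 v.2)ᵀ ∈ Matrix.orthogonalGroup (Fin (n + 2)) ℝ := by
      rw [← star_eq_transpose]
      exact Unitary.star_mem (cb_mem _ hv2)
    have hmL : Measurable fun A : Matrix (Fin (n + 2)) (Fin (n + 2)) ℝ =>
        cornerBlock 1 v.1 * A := measurable_mul_comp measurable_const measurable_id
    have hmR : Measurable fun M : Matrix (Fin (n + 2)) (Fin (n + 2)) ℝ =>
        M * (cornerBlock 1 v.2)ᵀ := measurable_mul_comp measurable_id measurable_const
    have hmap : Measure.map
        (fun A => cornerBlock 1 v.1 * A * (cornerBlock 1 v.2)ᵀ) μ = μ := by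
      have hcomp : (fun A : Matrix (Fin (n + 2)) (Fin (n + 2)) ℝ =>
          cornerBlock 1 v.1 * A * (cornerBlock 1 v.2)ᵀ) =
          (fun M => M * (cornerBlock 1 v.2)ᵀ) ∘ (fun A => cornerBlock 1 v.1 * A) := rfl
      rw [hcomp, ← Measure.map_map hmR hmL, hμL _ hg1, hμR _ hg2]
    have hset : ((fun A => (A, v)) ⁻¹' (G ⁻¹' E)) =
        (fun A => cornerBlock 1 v.1 * A * (cornerBlock 1 v.2)ᵀ) ⁻¹' E := rfl
    have hm3 : Measurable fun A : Matrix (Fin (n + 2)) (Fin (n + 2)) ℝ =>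
        cornerBlock 1 v.1 * A * (cornerBlock 1 v.2)ᵀ :=
      measurable_mul_comp (measurable_mul_comp measurable_const measurable_id) measurable_const
    rw [hset, ← Measure.map_apply hm3 hE, hmap]
  rw [lintegral_congr_ae step2, lintegral_const, measure_univ, mul_one]
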